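/- Let 0<s<1, p>2 and ω ∈ ℝ. Suppose u : ℝ² → ℝ is measurable, u > 0 almost everywhere, u ∈ L¹(ℝ²) and u^{p−1} ∈ L¹(ℝ²), u has a representative that is axially symmetric and bell-shaped in each variable (for each fixed y the map x ↦ u(x,y) is even and nonincreasing in |x|, and for each fixed x the map y ↦ u(x,y) is even and nonincreasing in |y|), and u solves the profile equation in the distributional sense: ∫_{ℝ²} u(z) · F⁻¹[m_{s,ω}·ĥ](z) dz = ∫_{ℝ²} u(z)^{p−1} h(z) dz for every Schwartz function h, where F⁻¹[m_{s,ω}·ĥ] denotes the bounded continuous function whose Fourier transform is the integrable function m_{s,ω}·ĥ. Then ω > 0. -/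

import Mathlib

noncomputable section

open MeasureTheory Complex SchwartzMap Set
open scoped Real ComplexConjugate ENNReal

/-- The Fourier integral of a complex-valued function on `ℝ² = ℝ × ℝ`:
`û(ξ) = ∫ u(z) e^{-2πi z·ξ} dz`. -/
def FTc (u : ℝ × ℝ → ℂ) (ξ : ℝ × ℝ) : ℂ :=
  ∫ z : ℝ × ℝ, Complex.exp (Complex.I * ((-2 * Real.pi * (z.1 * ξ.1 + z.2 * ξ.2) : ℝ) : ℂ)) * u z

/-- The inverse Fourier integral `∫ g(ξ) e^{2πi z·ξ} dξ`. -/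
def IFTc (g : ℝ × ℝ → ℂ) (z : ℝ × ℝ) : ℂ :=
  ∫ ξ : ℝ × ℝ, Complex.exp (Complex.I * ((2 * Real.pi * (z.1 * ξ.1 + z.2 * ξ.2) : ℝ) : ℂ)) * g ξ

/-- `w` is the Fourier transform of `u ∈ L²(ℝ²)` in the Plancherel/distributional sense:
`w ∈ L²` and `∫ w h = ∫ u ĥ` for every Schwartz function `h`. -/
def HasFourier (u w : ℝ × ℝ → ℂ) : Prop :=
  MemLp w 2 (volume : Measure (ℝ × ℝ)) ∧
    ∀ h : SchwartzMap (ℝ × ℝ) ℂ,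
      ∫ ξ : ℝ × ℝ, w ξ * h ξ = ∫ z : ℝ × ℝ, u z * FTc (fun x => h x) z

/-- The Fourier transform of a real-valued function. -/
def HasFourierR (u : ℝ × ℝ → ℝ) (w : ℝ × ℝ → ℂ) : Prop :=
  HasFourier (fun z => (u z : ℂ)) w

/-- The anisotropic symbol `m_{s,ω}(ξ) = 4π²ξ₁² + (2π|ξ₂|)^{2s} + ω`. -/
def symb (s ω : ℝ) (ξ : ℝ × ℝ) : ℝ :=
  4 * Real.pi ^ 2 * ξ.1 ^ 2 + (2 * Real.pi * |ξ.2|) ^ (2 * s) + ω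

/-- `u ∈ H^{1,s}(ℝ²)`, with designated Fourier transform `w`. -/
def InH1s (s : ℝ) (u : ℝ × ℝ → ℝ) (w : ℝ × ℝ → ℂ) : Prop :=
  MemLp u 2 (volume : Measure (ℝ × ℝ)) ∧ HasFourierR u w ∧
    Integrable (fun ξ : ℝ × ℝ => symb s 1 ξ * ‖w ξ‖ ^ 2) (volume : Measure (ℝ × ℝ))

/-- `u ∈ H^{1,s}(ℝ²;ℂ)`, with designated Fourier transform `w`. -/
def InH1sC (s : ℝ) (u : ℝ × ℝ → ℂ) (w : ℝ × ℝ → ℂ) : Prop :=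
  MemLp u 2 (volume : Measure (ℝ × ℝ)) ∧ HasFourier u w ∧
    Integrable (fun ξ : ℝ × ℝ => symb s 1 ξ * ‖w ξ‖ ^ 2) (volume : Measure (ℝ × ℝ))

/-- `u` is a (real-valued) weak solution of `-∂ₓₓ u + (-∂_yy)^s u + ω u = |u|^{p-2} u`. -/
def IsWeakSol (s ω p : ℝ) (u : ℝ × ℝ → ℝ) (w : ℝ × ℝ → ℂ) : Prop :=
  InH1s s u w ∧ MemLp u (ENNReal.ofReal p) (volume : Measure (ℝ × ℝ)) ∧
    ∀ h : SchwartzMap (ℝ × ℝ) ℝ,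
      ∫ ξ : ℝ × ℝ, (symb s ω ξ : ℂ) * w ξ * conj (FTc (fun z => (h z : ℂ)) ξ)
        = ((∫ z : ℝ × ℝ, |u z| ^ (p - 2) * u z * h z : ℝ) : ℂ)

/-- The Weinstein functional `J[u]`. -/
def Jfun (s ω p : ℝ) (u : ℝ × ℝ → ℝ) (w : ℝ × ℝ → ℂ) : ℝ :=
  (∫ ξ : ℝ × ℝ, symb s ω ξ * ‖w ξ‖ ^ 2) / (∫ z : ℝ × ℝ, |u z| ^ p) ^ (2 / p)

/-- The Weinstein infimum `J_ω`. -/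
def Jinf (s ω p : ℝ) : ℝ :=
  sInf {j : ℝ | ∃ u w, InH1s s u w ∧
    ¬ (u =ᵐ[(volume : Measure (ℝ × ℝ))] fun _ => (0 : ℝ)) ∧ j = Jfun s ω p u w}

/-- Axially symmetric and bell-shaped in each variable. -/
def BellShaped (v : ℝ × ℝ → ℝ) : Prop :=
  (∀ x y, v (-x, y) = v (x, y)) ∧ (∀ x y, v (x, -y) = v (x, y)) ∧
    (∀ y x₁ x₂, 0 ≤ x₁ → x₁ ≤ x₂ → v (x₂, y) ≤ v (x₁, y)) ∧
    (∀ x y₁ y₂, 0 ≤ y₁ → y₁ ≤ y₂ → v (x, y₂) ≤ v (x, y₁))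

/-- The action functional `S_ω`. -/
def SAction (s ω p : ℝ) (u : ℝ × ℝ → ℝ) (w : ℝ × ℝ → ℂ) : ℝ :=
  (1 / 2) * ∫ ξ : ℝ × ℝ, symb s ω ξ * ‖w ξ‖ ^ 2
    - (1 / p) * ∫ z : ℝ × ℝ, |u z| ^ p

/-- Ground state: a nonzero weak solution minimizing the action among nonzero weak solutions. -/
def IsGroundState (s ω p : ℝ) (u : ℝ × ℝ → ℝ) (w : ℝ × ℝ → ℂ) : Prop :=
  IsWeakSol s ω p u w ∧ ¬ (u =ᵐ[(volume : Measure (ℝ × ℝ))] fun _ => (0 : ℝ)) ∧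
    ∀ v wv, IsWeakSol s ω p v wv →
      ¬ (v =ᵐ[(volume : Measure (ℝ × ℝ))] fun _ => (0 : ℝ)) →
        SAction s ω p u w ≤ SAction s ω p v wv

/-- `g = x·∂ₓu` in the distributional sense. -/
def IsXdxU (u g : ℝ × ℝ → ℝ) : Prop :=
  ∀ h : SchwartzMap (ℝ × ℝ) ℝ,
    ∫ z : ℝ × ℝ, g z * h z
      = -∫ z : ℝ × ℝ, u z * (h z + z.1 * fderiv ℝ (fun x => h x) z (1, 0))

/-- `g = y·∂_yu` in the distributional sense. -/
def IsYdyU (u g : ℝ × ℝ → ℝ) : Prop :=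
  ∀ h : SchwartzMap (ℝ × ℝ) ℝ,
    ∫ z : ℝ × ℝ, g z * h z
      = -∫ z : ℝ × ℝ, u z * (h z + z.2 * fderiv ℝ (fun x => h x) z (0, 1))

/-- `g = ∂ₓu` in the distributional sense. -/
def IsPartialX (u g : ℝ × ℝ → ℝ) : Prop :=
  ∀ h : SchwartzMap (ℝ × ℝ) ℝ,
    ∫ z : ℝ × ℝ, g z * h z = -∫ z : ℝ × ℝ, u z * fderiv ℝ (fun x => h x) z (1, 0)

/-- `g = ∂_yu` in the distributional sense. -/
def IsPartialY (u g : ℝ × ℝ → ℝ) : Prop :=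
  ∀ h : SchwartzMap (ℝ × ℝ) ℝ,
    ∫ z : ℝ × ℝ, g z * h z = -∫ z : ℝ × ℝ, u z * fderiv ℝ (fun x => h x) z (0, 1)

/-- `T₁ = ‖∂ₓu‖_{L²}² = ∫ 4π²ξ₁²|û(ξ)|² dξ`. -/
def KEx (w : ℝ × ℝ → ℂ) : ℝ := ∫ ξ : ℝ × ℝ, 4 * Real.pi ^ 2 * ξ.1 ^ 2 * ‖w ξ‖ ^ 2

/-- `T₂ = ‖D_y^s u‖_{L²}² = ∫ (2π|ξ₂|)^{2s}|û(ξ)|² dξ`. -/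
def KEy (s : ℝ) (w : ℝ × ℝ → ℂ) : ℝ :=
  ∫ ξ : ℝ × ℝ, (2 * Real.pi * |ξ.2|) ^ (2 * s) * ‖w ξ‖ ^ 2

/-- `M = ∫ |u|²`. -/
def Mass (u : ℝ × ℝ → ℝ) : ℝ := ∫ z : ℝ × ℝ, (u z) ^ 2

/-- `V = ∫ |u|^p`. -/
def Vint (p : ℝ) (u : ℝ × ℝ → ℝ) : ℝ := ∫ z : ℝ × ℝ, |u z| ^ p

/-- The anisotropic heat kernel
`H(x,y,t) = ∫ e^{-2πi(xξ₁+yξ₂)} e^{-t(ξ₁² + |ξ₂|^{2s})} dξ`. -/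
def Hker (s t : ℝ) (z : ℝ × ℝ) : ℂ :=
  ∫ ξ : ℝ × ℝ, Complex.exp (Complex.I * ((-2 * Real.pi * (z.1 * ξ.1 + z.2 * ξ.2) : ℝ) : ℂ))
    * Complex.exp (-((t * (ξ.1 ^ 2 + |ξ.2| ^ (2 * s)) : ℝ) : ℂ))

/-- The anisotropic Green's function `K(x,y) = ∫₀^∞ e^{-t} H(x,y,t) dt`. -/
def Kker (s : ℝ) (z : ℝ × ℝ) : ℂ :=
  ∫ t in Set.Ioi (0 : ℝ), Real.exp (-t) • Hker s t z

open Filter Topology FourierTransform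
open scoped RealInnerProductSpace

def VtoE : (ℝ × ℝ) ≃L[ℝ] EuclideanSpace ℝ (Fin 2) :=
  LinearEquiv.toContinuousLinearEquiv <|
    (LinearEquiv.finTwoArrow ℝ ℝ).symm.trans (WithLp.linearEquiv 2 ℝ (Fin 2 → ℝ)).symm

lemma VtoE_apply_0 (z : ℝ × ℝ) : VtoE z 0 = z.1 := rfl
lemma VtoE_apply_1 (z : ℝ × ℝ) : VtoE z 1 = z.2 := rfl
lemma VtoE_symm_apply (x : EuclideanSpace ℝ (Fin 2)) : VtoE.symm x = (x 0, x 1) := rfl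

lemma inner_VtoE (z ξ : ℝ × ℝ) : ⟪VtoE z, VtoE ξ⟫ = z.1 * ξ.1 + z.2 * ξ.2 := by
  simp [PiLp.inner_apply, Fin.sum_univ_two, VtoE_apply_0, VtoE_apply_1, RCLike.inner_apply]
  ring

lemma mpVtoE : MeasurePreserving (⇑VtoE) volume volume := by
  have h1 := (EuclideanSpace.volume_preserving_symm_measurableEquiv_toLp (Fin 2)).symm
  have h2 := (volume_preserving_finTwoArrow ℝ).symm
  have h3 := h1.comp h2
  have : ⇑VtoE = (⇑(MeasurableEquiv.toLp 2 (Fin 2 → ℝ)) ∘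
      ⇑(MeasurableEquiv.finTwoArrow (α := ℝ)).symm) := by
    funext z; rfl
  rw [this]; exact h3

lemma embVtoE : MeasurableEmbedding (⇑VtoE) :=
  VtoE.toHomeomorph.measurableEmbedding

/-- Complexification of a real Schwartz map. -/
def cplx {D : Type*} [NormedAddCommGroup D] [NormedSpace ℝ D] (f : SchwartzMap D ℝ) :
    SchwartzMap D ℂ where
  toFun x := (f x : ℂ)
  smooth' := Complex.ofRealCLM.contDiff.comp f.smooth'
  decay' := by
    intro k n
    obtain ⟨C, hC⟩ := f.decay' k n
    refine ⟨C, fun x => ?_⟩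
    have heq : ‖iteratedFDeriv ℝ n (fun x => (f x : ℂ)) x‖ = ‖iteratedFDeriv ℝ n f x‖ := by
      have := Complex.ofRealLI.norm_iteratedFDeriv_comp_left (f := ⇑f) (x := x) f.smooth'.contDiffAt
        (i := n) (by exact_mod_cast le_top)
      exact this
    rw [heq]; exact hC x

@[simp] lemma cplx_apply {D : Type*} [NormedAddCommGroup D] [NormedSpace ℝ D]
    (f : SchwartzMap D ℝ) (x : D) : cplx f x = (f x : ℂ) := rfl

/-- Transfer of a Schwartz function to Euclidean space. -/
def toE (h : SchwartzMap (ℝ × ℝ) ℝ) : SchwartzMap (EuclideanSpace ℝ (Fin 2)) ℂ :=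
  SchwartzMap.compCLMOfContinuousLinearEquiv ℝ VtoE.symm (cplx h)

@[simp] lemma toE_apply (h : SchwartzMap (ℝ × ℝ) ℝ) (x : EuclideanSpace ℝ (Fin 2)) :
    toE h x = (h (VtoE.symm x) : ℂ) := rfl

/-- The Fourier side Schwartz function. -/
def FTE (h : SchwartzMap (ℝ × ℝ) ℝ) : SchwartzMap (EuclideanSpace ℝ (Fin 2)) ℂ :=
  SchwartzMap.fourierTransformCLM ℂ (toE h)

lemma FTE_eq (h : SchwartzMap (ℝ × ℝ) ℝ) : ⇑(FTE h) = 𝓕 ⇑(toE h) := rfl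

lemma FTc_eq (h : SchwartzMap (ℝ × ℝ) ℝ) (ξ : ℝ × ℝ) :
    FTc (fun x => (h x : ℂ)) ξ = FTE h (VtoE ξ) := by
  have : FTE h (VtoE ξ) = ∫ v, Complex.exp ((↑(-2 * Real.pi * ⟪v, VtoE ξ⟫) * Complex.I)) • toE h v := by
    rw [FTE_eq]; exact Real.fourier_eq' _ _
  rw [this, ← mpVtoE.integral_comp embVtoE]
  unfold FTc
  congr 1
  funext z
  rw [inner_VtoE]
  simp only [toE_apply, ContinuousLinearEquiv.symm_apply_apply, smul_eq_mul]
  ring_nf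

lemma continuous_symb (s ω : ℝ) (hs0 : 0 < s) : Continuous (symb s ω) := by
  unfold symb
  refine (Continuous.add (Continuous.add (by fun_prop) ?_) continuous_const)
  refine Continuous.rpow_const ?_ fun x => Or.inr (by positivity)
  fun_prop

lemma continuous_FTc (h : SchwartzMap (ℝ × ℝ) ℝ) :
    Continuous (FTc (fun x => (h x : ℂ))) := by
  have : FTc (fun x => (h x : ℂ)) = ⇑(FTE h) ∘ ⇑VtoE := by
    funext ξ; exact FTc_eq h ξ
  rw [this]
  exact (FTE h).continuous.comp VtoE.continuous

lemma norm_VtoE_symm_le (x : EuclideanSpace ℝ (Fin 2)) : ‖VtoE.symm x‖ ≤ ‖x‖ := by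
  have h : ∀ i : Fin 2, |x i| ≤ ‖x‖ := by
    intro i
    rw [EuclideanSpace.norm_eq, ← Real.sqrt_sq_eq_abs]
    apply Real.sqrt_le_sqrt
    fin_cases i <;> simp [Fin.sum_univ_two] <;> positivity
  rw [VtoE_symm_apply, Prod.norm_def]
  simp only [Real.norm_eq_abs]
  exact max_le (h 0) (h 1)

lemma abs_symb_le (s ω : ℝ) (hs0 : 0 < s) (hs1 : s < 1) (ξ : ℝ × ℝ) :
    |symb s ω ξ| ≤ (4 * Real.pi ^ 2 + 64 + |ω|) * (1 + ‖ξ‖) ^ 3 := by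
  have hn : (0:ℝ) ≤ ‖ξ‖ := norm_nonneg _
  have h1 : |ξ.1| ≤ ‖ξ‖ := by simpa [Real.norm_eq_abs] using norm_fst_le ξ
  have h2 : |ξ.2| ≤ ‖ξ‖ := by simpa [Real.norm_eq_abs] using norm_snd_le ξ
  have t0 : (0:ℝ) ≤ 2 * π * |ξ.2| := by positivity
  have rp0 : (0:ℝ) ≤ (2 * π * |ξ.2|) ^ (2*s) := Real.rpow_nonneg t0 _
  have hr : (2 * π * |ξ.2|) ^ (2*s) ≤ 64 * (1 + ‖ξ‖) ^ 2 := by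
    have e1 : (2*π*|ξ.2|) ^ (2*s) ≤ (1 + 2*π*|ξ.2|) ^ (2*s) :=
      Real.rpow_le_rpow t0 (by linarith) (by positivity)
    have e2 : (1+2*π*|ξ.2|) ^ (2*s) ≤ (1+2*π*|ξ.2|) ^ (2:ℝ) :=
      Real.rpow_le_rpow_of_exponent_le (by linarith) (by linarith)
    have e3 : (1+2*π*|ξ.2|) ^ (2:ℝ) = (1+2*π*|ξ.2|) ^ (2:ℕ) := by
      rw [← Real.rpow_natCast]; norm_num
    have e5 : 2*π*|ξ.2| ≤ 8*‖ξ‖ := by nlinarith [Real.pi_le_four, Real.pi_pos]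
    have e4 : (1+2*π*|ξ.2|) ^ (2:ℕ) ≤ 64 * (1+‖ξ‖) ^ 2 := by nlinarith
    calc (2*π*|ξ.2|) ^ (2*s) ≤ (1+2*π*|ξ.2|) ^ (2:ℝ) := le_trans e1 e2
    _ = (1+2*π*|ξ.2|) ^ (2:ℕ) := e3
    _ ≤ 64 * (1+‖ξ‖) ^ 2 := e4
  have habs : |symb s ω ξ| ≤ 4*π^2*ξ.1^2 + (2*π*|ξ.2|) ^ (2*s) + |ω| := by
    unfold symb
    have : |4*π^2*ξ.1^2 + (2*π*|ξ.2|) ^ (2*s) + ω| ≤ |4*π^2*ξ.1^2 + (2*π*|ξ.2|) ^ (2*s)| + |ω| :=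
      abs_add_le _ _
    have h' : |4*π^2*ξ.1^2 + (2*π*|ξ.2|) ^ (2*s)| = 4*π^2*ξ.1^2 + (2*π*|ξ.2|) ^ (2*s) := by
      rw [_root_.abs_of_nonneg]; positivity
    calc |4*π^2*ξ.1^2 + (2*π*|ξ.2|) ^ (2*s) + ω| ≤ _ := this
    _ = 4*π^2*ξ.1^2 + (2*π*|ξ.2|) ^ (2*s) + |ω| := by rw [h']
  have hx : ξ.1^2 ≤ (1+‖ξ‖)^3 := by nlinarith [abs_nonneg ξ.1, _root_.sq_abs ξ.1]
  have c1 : 4*π^2*ξ.1^2 ≤ 4*π^2*(1+‖ξ‖)^3 :=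
    mul_le_mul_of_nonneg_left hx (by positivity)
  have c2 : 64*(1+‖ξ‖)^2 ≤ 64*(1+‖ξ‖)^3 := by
    have : (1+‖ξ‖)^2 ≤ (1+‖ξ‖)^3 := pow_le_pow_right₀ (by linarith) (by norm_num)
    linarith
  have c3 : |ω| ≤ |ω| * (1+‖ξ‖)^3 :=
    le_mul_of_one_le_right (abs_nonneg ω) (one_le_pow₀ (by linarith))
  have expand : (4*π^2 + 64 + |ω|) * (1+‖ξ‖)^3
      = 4*π^2*(1+‖ξ‖)^3 + 64*(1+‖ξ‖)^3 + |ω| * (1+‖ξ‖)^3 := by ring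
  linarith

lemma integrable_cube_FT (h : SchwartzMap (ℝ × ℝ) ℝ) :
    Integrable (fun ξ : ℝ × ℝ => (1 + ‖ξ‖) ^ 3 * ‖FTc (fun x => (h x : ℂ)) ξ‖) volume := by
  set ψ := FTE h with hψ
  have hco : (fun ξ : ℝ × ℝ => (1 + ‖ξ‖) ^ 3 * ‖FTc (fun x => (h x : ℂ)) ξ‖)
      = (fun x : EuclideanSpace ℝ (Fin 2) => (1 + ‖VtoE.symm x‖) ^ 3 * ‖ψ x‖) ∘ ⇑VtoE := by
    funext ξ
    simp [Function.comp, FTc_eq h ξ]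
    exact Or.inl rfl
  rw [hco, mpVtoE.integrable_comp_emb embVtoE]
  have hb : Integrable (fun x : EuclideanSpace ℝ (Fin 2) => 8 * (‖ψ x‖ + ‖x‖ ^ 3 * ‖ψ x‖)) volume :=
    (ψ.integrable.norm.add (ψ.integrable_pow_mul volume 3)).const_mul 8
  refine hb.mono' ?_ ?_
  · exact (((continuous_const.add VtoE.symm.continuous.norm).pow 3).mul ψ.continuous.norm).aestronglyMeasurable
  · refine Eventually.of_forall fun x => ?_
    have h1 : ‖VtoE.symm x‖ ≤ ‖x‖ := norm_VtoE_symm_le x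
    have h2 : (0:ℝ) ≤ ‖x‖ := norm_nonneg _
    have h3 : (0:ℝ) ≤ ‖ψ x‖ := norm_nonneg _
    have h4 : (1 + ‖VtoE.symm x‖) ^ 3 ≤ 8 * (1 + ‖x‖ ^ 3) := by
      have e1 : (1 + ‖VtoE.symm x‖) ^ 3 ≤ (1 + ‖x‖) ^ 3 :=
        pow_le_pow_left₀ (by positivity) (by linarith) 3
      nlinarith [sq_nonneg (‖x‖ - 1), mul_nonneg h2 (sq_nonneg (‖x‖ - 1))]
    rw [Real.norm_of_nonneg (by positivity)]
    nlinarith [mul_le_mul_of_nonneg_right h4 h3]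

/-- A reference bump. -/
def bcd : ContDiffBump (0 : ℝ × ℝ) := ⟨1, 2, one_pos, one_lt_two⟩

def bump2 : SchwartzMap (ℝ × ℝ) ℝ where
  toFun := ⇑bcd
  smooth' := bcd.contDiff
  decay' := by
    intro k n
    have hcs : HasCompactSupport (iteratedFDeriv ℝ n ⇑bcd) :=
      bcd.hasCompactSupport.iteratedFDeriv n
    have hcont : Continuous (iteratedFDeriv ℝ n ⇑bcd) :=
      (bcd.contDiff (n := ⊤)).continuous_iteratedFDeriv (by exact_mod_cast le_top)
    have hg : HasCompactSupport fun x : ℝ × ℝ => ‖x‖ ^ k * ‖iteratedFDeriv ℝ n ⇑bcd x‖ := by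
      apply HasCompactSupport.mul_left
      exact hcs.norm
    obtain ⟨C, hC⟩ := hg.exists_bound_of_continuous (by fun_prop)
    refine ⟨C, fun x => ?_⟩
    have := hC x
    rw [Real.norm_of_nonneg (by positivity)] at this
    exact this

lemma bump2_apply (x : ℝ × ℝ) : bump2 x = bcd x := rfl
lemma bump2_zero : bump2 0 = 1 := by
  rw [bump2_apply]
  exact bcd.one_of_mem_closedBall (by simp [bcd])
lemma bump2_nonneg (x : ℝ × ℝ) : 0 ≤ bump2 x := bcd.nonneg
lemma bump2_le_one (x : ℝ × ℝ) : bump2 x ≤ 1 := bcd.le_one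
lemma bump2_continuous : Continuous (⇑bump2) := bump2.continuous

/-- Dilation of Schwartz functions. -/
def dil (ε : ℝ) (hε : ε ≠ 0) (h : SchwartzMap (ℝ × ℝ) ℝ) : SchwartzMap (ℝ × ℝ) ℝ :=
  SchwartzMap.compCLMOfContinuousLinearEquiv ℝ
    ((LinearEquiv.smulOfNeZero ℝ (ℝ × ℝ) ε hε).toContinuousLinearEquiv) h

lemma dil_apply (ε : ℝ) (hε : ε ≠ 0) (h : SchwartzMap (ℝ × ℝ) ℝ) (z : ℝ × ℝ) :
    dil ε hε h z = h (ε • z) := rfl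

lemma finrank_V : Module.finrank ℝ (ℝ × ℝ) = 2 := by
  simp [Module.finrank_prod]

lemma FTc_dil (h : SchwartzMap (ℝ × ℝ) ℝ) (ε : ℝ) (hε : 0 < ε) (ξ : ℝ × ℝ) :
    FTc (fun x => ((dil ε hε.ne' h) x : ℂ)) ξ
      = ((ε ^ 2)⁻¹ : ℝ) • FTc (fun x => (h x : ℂ)) (ε⁻¹ • ξ) := by
  unfold FTc
  have key : ∀ z : ℝ × ℝ,
      Complex.exp (Complex.I * ((-2 * Real.pi * (z.1 * ξ.1 + z.2 * ξ.2) : ℝ) : ℂ))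
          * ((dil ε hε.ne' h) z : ℂ)
        = (fun w : ℝ × ℝ =>
            Complex.exp (Complex.I *
              ((-2 * Real.pi * (w.1 * (ε⁻¹ • ξ).1 + w.2 * (ε⁻¹ • ξ).2) : ℝ) : ℂ)) * (h w : ℂ))
          (ε • z) := by
    intro z
    simp only [dil_apply, Prod.smul_fst, Prod.smul_snd, smul_eq_mul]
    have harg : -2 * Real.pi * (ε * z.1 * (ε⁻¹ * ξ.1) + ε * z.2 * (ε⁻¹ * ξ.2))
        = -2 * Real.pi * (z.1 * ξ.1 + z.2 * ξ.2) := by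
      field_simp
    rw [harg]
  simp_rw [key]
  have e2 := MeasureTheory.Measure.integral_comp_smul volume
    (fun w : ℝ × ℝ => Complex.exp (Complex.I *
      ((-2 * Real.pi * (w.1 * (ε⁻¹ • ξ).1 + w.2 * (ε⁻¹ • ξ).2) : ℝ) : ℂ)) * (h w : ℂ)) ε
  rw [e2, finrank_V, _root_.abs_of_nonneg (by positivity : (0:ℝ) ≤ ((ε^2)⁻¹))]

lemma integral_FTc_eq (h : SchwartzMap (ℝ × ℝ) ℝ) :
    ∫ ξ : ℝ × ℝ, FTc (fun x => (h x : ℂ)) ξ = (h 0 : ℂ) := by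
  have h1 : ∫ ξ : ℝ × ℝ, FTc (fun x => (h x : ℂ)) ξ
      = ∫ x : EuclideanSpace ℝ (Fin 2), FTE h x := by
    simp_rw [FTc_eq]
    exact mpVtoE.integral_comp embVtoE _
  have hinv : 𝓕⁻ (𝓕 ⇑(toE h)) = ⇑(toE h) :=
    (toE h).continuous.fourierInv_fourier_eq (toE h).integrable
      (by exact (SchwartzMap.fourierTransformCLM ℂ (toE h)).integrable)
  have h0 : 𝓕⁻ (𝓕 ⇑(toE h)) 0 = ∫ x : EuclideanSpace ℝ (Fin 2), 𝓕 (⇑(toE h)) x := by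
    rw [Real.fourierInv_eq']
    simp
  have h2 : ∫ x : EuclideanSpace ℝ (Fin 2), FTE h x
      = ∫ x : EuclideanSpace ℝ (Fin 2), 𝓕 (⇑(toE h)) x := by rfl
  rw [h1, h2, ← h0, hinv]
  have : (0 : ℝ × ℝ) = VtoE.symm 0 := by simp
  simp [toE_apply, ← this]

lemma fubini_pairing (u : ℝ × ℝ → ℝ) (hmeas : Measurable u) (hL1 : Integrable u volume)
    (g : ℝ × ℝ → ℂ) (hg : Integrable g volume) (hgc : Continuous g)
    (Cu : (ℝ × ℝ) → ℂ)
    (hCu : ∀ ξ : ℝ × ℝ, Cu ξ = ∫ z : ℝ × ℝ,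
      Complex.exp (Complex.I * ((2 * Real.pi * (z.1 * ξ.1 + z.2 * ξ.2) : ℝ) : ℂ)) * u z) :
    ∫ z : ℝ × ℝ, (u z : ℂ) * IFTc g z = ∫ ξ : ℝ × ℝ, g ξ * Cu ξ := by
  simp_rw [hCu]
  set e : (ℝ × ℝ) → (ℝ × ℝ) → ℂ := fun z ξ =>
    Complex.exp (Complex.I * ((2 * Real.pi * (z.1 * ξ.1 + z.2 * ξ.2) : ℝ) : ℂ)) with he
  have hkercont : Continuous fun p : (ℝ × ℝ) × (ℝ × ℝ) => e p.1 p.2 := by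
    apply Complex.continuous_exp.comp
    apply continuous_const.mul
    apply Complex.continuous_ofReal.comp
    fun_prop
  have hnorm_e : ∀ z ξ, ‖e z ξ‖ = 1 := by
    intro z ξ
    rw [he]
    simp only [mul_comm Complex.I _]
    exact Complex.norm_exp_ofReal_mul_I _
  set F : (ℝ × ℝ) → (ℝ × ℝ) → ℂ := fun z ξ => (u z : ℂ) * (e z ξ * g ξ) with hF
  have hbase : Integrable (fun p : (ℝ × ℝ) × (ℝ × ℝ) => ‖(u p.1 : ℂ) * g p.2‖)
      (volume.prod volume) := (hL1.ofReal.mul_prod hg).norm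
  have hFint : Integrable (Function.uncurry F) (volume.prod volume) := by
    refine hbase.mono' ?_ ?_
    · exact ((Complex.measurable_ofReal.comp (hmeas.comp measurable_fst)).aestronglyMeasurable).mul
        ((hkercont.mul (hgc.comp continuous_snd)).aestronglyMeasurable)
    · refine Eventually.of_forall fun p => ?_
      simp only [Function.uncurry, hF, norm_mul, hnorm_e, norm_norm]
      simp [norm_mul]
  have step1 : ∫ z : ℝ × ℝ, (u z : ℂ) * IFTc g z = ∫ z : ℝ × ℝ, ∫ ξ : ℝ × ℝ, F z ξ := by
    unfold IFTc
    congr 1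
    funext z
    rw [MeasureTheory.integral_const_mul]
  rw [step1, MeasureTheory.integral_integral_swap hFint]
  congr 1
  funext ξ
  have : ∀ z, F z ξ = g ξ * (e z ξ * (u z : ℂ)) := by
    intro z; rw [hF]; ring
  simp_rw [this]
  rw [MeasureTheory.integral_const_mul]

lemma symb_abs_nonneg (s ω : ℝ) (η : ℝ × ℝ) : 0 ≤ symb s |ω| η := by
  unfold symb
  have : (0:ℝ) ≤ (2 * Real.pi * |η.2|) ^ (2*s) := Real.rpow_nonneg (by positivity) _
  positivity

lemma symb_scaled_abs_le (s ω : ℝ) (hs0 : 0 < s) {ε : ℝ} (h0 : 0 < ε) (h1 : ε ≤ 1) (η : ℝ × ℝ) :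
    |symb s ω (ε • η)| ≤ symb s |ω| η := by
  unfold symb
  simp only [Prod.smul_fst, Prod.smul_snd, smul_eq_mul]
  have c1 : 4 * Real.pi ^ 2 * (ε * η.1) ^ 2 ≤ 4 * Real.pi ^ 2 * η.1 ^ 2 := by
    have he2 : ε ^ 2 ≤ 1 := by nlinarith
    have : (ε * η.1)^2 ≤ η.1^2 := by
      nlinarith [mul_nonneg (by nlinarith : (0:ℝ) ≤ 1 - ε^2) (sq_nonneg η.1)]
    nlinarith [Real.pi_pos]
  have c2 : (2 * Real.pi * |ε * η.2|) ^ (2*s) ≤ (2 * Real.pi * |η.2|) ^ (2*s) := by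
    apply Real.rpow_le_rpow (by positivity)
    · rw [abs_mul, _root_.abs_of_pos h0]
      nlinarith [mul_nonneg Real.pi_pos.le (abs_nonneg η.2),
        mul_le_mul_of_nonneg_right h1 (abs_nonneg η.2), Real.pi_pos]
    · positivity
  have rp0 : (0:ℝ) ≤ (2 * Real.pi * |ε * η.2|) ^ (2*s) := Real.rpow_nonneg (by positivity) _
  have htri : |4 * Real.pi ^ 2 * (ε * η.1) ^ 2 + (2 * Real.pi * |ε * η.2|) ^ (2*s) + ω|
      ≤ 4 * Real.pi ^ 2 * (ε * η.1) ^ 2 + (2 * Real.pi * |ε * η.2|) ^ (2*s) + |ω| := by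
    refine (abs_add_le _ _).trans ?_
    rw [_root_.abs_of_nonneg (by positivity)]
  linarith

lemma symb_scaled_tendsto (s ω : ℝ) (hs0 : 0 < s) {ε : ℕ → ℝ} (hpos : ∀ n, 0 < ε n)
    (h0 : Filter.Tendsto ε Filter.atTop (nhds 0)) (η : ℝ × ℝ) :
    Filter.Tendsto (fun n => symb s ω (ε n • η)) Filter.atTop (nhds ω) := by
  have hfun : ∀ n, symb s ω (ε n • η)
      = 4 * Real.pi ^ 2 * (ε n * η.1) ^ 2 + (ε n) ^ (2*s) * ((2 * Real.pi * |η.2|) ^ (2*s)) + ω := by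
    intro n
    unfold symb
    simp only [Prod.smul_fst, Prod.smul_snd, smul_eq_mul]
    rw [abs_mul, _root_.abs_of_pos (hpos n),
      show 2 * Real.pi * (ε n * |η.2|) = ε n * (2 * Real.pi * |η.2|) by ring,
      Real.mul_rpow (hpos n).le (by positivity)]
  have t1 : Filter.Tendsto (fun n => 4 * Real.pi ^ 2 * (ε n * η.1) ^ 2) Filter.atTop (nhds 0) := by
    have hc : Continuous fun t : ℝ => 4 * Real.pi ^ 2 * (t * η.1) ^ 2 := by fun_prop
    have := (hc.tendsto 0).comp h0
    simpa [Function.comp_def] using this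
  have t2 : Filter.Tendsto (fun n => (ε n) ^ (2*s) * ((2 * Real.pi * |η.2|) ^ (2*s)))
      Filter.atTop (nhds 0) := by
    have hc := (Real.continuousAt_rpow_const 0 (2*s) (Or.inr (by positivity))).tendsto.comp h0
    rw [Real.zero_rpow (by positivity)] at hc
    simpa using hc.mul_const _
  have := (t1.add t2).add_const ω
  rw [zero_add, zero_add] at this
  exact this.congr fun n => (hfun n).symm

lemma integral_pos_of_ae_pos (f : ℝ × ℝ → ℝ) (hf : Integrable f volume)
    (h : ∀ᵐ z : ℝ × ℝ ∂volume, 0 < f z) : 0 < ∫ z : ℝ × ℝ, f z := by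
  have hae : 0 ≤ᵐ[volume] f := h.mono fun z hz => hz.le
  rw [MeasureTheory.integral_pos_iff_support_of_nonneg_ae hae hf]
  by_contra hns
  push_neg at hns
  have hns0 : volume (Function.support f) = 0 := le_antisymm (by simpa using hns) (zero_le)
  have h1 : volume {z : ℝ × ℝ | ¬ (0 < f z)} = 0 := ae_iff.mp h
  have hsub : {z : ℝ × ℝ | 0 < f z} ⊆ Function.support f := fun z hz => ne_of_gt hz
  have h2 : volume {z : ℝ × ℝ | 0 < f z} = 0 :=
    le_antisymm ((measure_mono hsub).trans (le_of_eq hns0)) (zero_le)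
  have huniv : volume (Set.univ : Set (ℝ × ℝ)) = 0 := by
    have hsub2 : (Set.univ : Set (ℝ × ℝ)) ⊆ {z | 0 < f z} ∪ {z | ¬ (0 < f z)} := by
      intro z _
      by_cases hz : 0 < f z
      · exact Or.inl hz
      · exact Or.inr hz
    refine le_antisymm ((measure_mono hsub2).trans ?_) (zero_le)
    calc volume ({z : ℝ × ℝ | 0 < f z} ∪ {z | ¬ (0 < f z)})
        ≤ volume {z : ℝ × ℝ | 0 < f z} + volume {z | ¬ (0 < f z)} := measure_union_le _ _
      _ = 0 := by rw [h1, h2]; simp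
  have : volume (Set.univ : Set (ℝ × ℝ)) ≠ 0 :=
    (MeasureTheory.Measure.measure_univ_pos.mpr (by
      intro hv
      exact (isOpen_univ.measure_ne_zero (μ := (volume : Measure (ℝ × ℝ)))
        Set.univ_nonempty) (by rw [hv]; simp))).ne'
  exact this huniv

/-- Necessity of `ω > 0`, Proposition 1.2, first part. -/
theorem statement_1 (s ω p : ℝ) (hs0 : 0 < s) (hs1 : s < 1) (hp : 2 < p)
    (u : ℝ × ℝ → ℝ) (hmeas : Measurable u)
    (hpos : ∀ᵐ z : ℝ × ℝ ∂(volume : Measure (ℝ × ℝ)), 0 < u z)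
    (hL1 : Integrable u (volume : Measure (ℝ × ℝ)))
    (hLp : Integrable (fun z : ℝ × ℝ => u z ^ (p - 1)) (volume : Measure (ℝ × ℝ)))
    (hbell : ∃ v : ℝ × ℝ → ℝ, u =ᵐ[(volume : Measure (ℝ × ℝ))] v ∧ BellShaped v)
    (heq : ∀ h : SchwartzMap (ℝ × ℝ) ℝ,
      ∫ z : ℝ × ℝ, (u z : ℂ) *
          IFTc (fun ξ => (symb s ω ξ : ℂ) * FTc (fun x => (h x : ℂ)) ξ) z
        = ((∫ z : ℝ × ℝ, u z ^ (p - 1) * h z : ℝ) : ℂ)) :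
    0 < ω := by
  classical
  -- positivity of the two integrals
  have hI0 : 0 < ∫ z : ℝ × ℝ, u z := integral_pos_of_ae_pos u hL1 hpos
  have hIp : 0 < ∫ z : ℝ × ℝ, u z ^ (p - 1) :=
    integral_pos_of_ae_pos _ hLp (hpos.mono fun z hz => Real.rpow_pos_of_pos hz _)
  -- the scaling sequence
  set ε : ℕ → ℝ := fun n => 1 / (n + 1) with hεdef
  have hεpos : ∀ n, 0 < ε n := fun n => by positivity
  have hεle1 : ∀ n, ε n ≤ 1 := fun n => by
    rw [hεdef]
    rw [div_le_one (by positivity)]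
    simp
  have hεto0 : Filter.Tendsto ε Filter.atTop (nhds 0) := tendsto_one_div_add_atTop_nhds_zero_nat
  -- the averaged transform of u
  set B : ℝ := ∫ z : ℝ × ℝ, ‖u z‖ with hBdef
  set Cu : (ℝ × ℝ) → ℂ := fun ξ => ∫ z : ℝ × ℝ,
    Complex.exp (Complex.I * ((2 * Real.pi * (z.1 * ξ.1 + z.2 * ξ.2) : ℝ) : ℂ)) * u z with hCudef
  have hker_norm : ∀ (z ξ : ℝ × ℝ),
      ‖Complex.exp (Complex.I * ((2 * Real.pi * (z.1 * ξ.1 + z.2 * ξ.2) : ℝ) : ℂ))‖ = 1 := by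
    intro z ξ
    rw [mul_comm Complex.I _]
    exact Complex.norm_exp_ofReal_mul_I _
  have hCu_bound : ∀ ξ, ‖Cu ξ‖ ≤ B := by
    intro ξ
    rw [hCudef]
    refine (norm_integral_le_integral_norm _).trans (le_of_eq ?_)
    rw [hBdef]
    congr 1
    funext z
    rw [norm_mul, hker_norm, one_mul, Complex.norm_real]
  have hCu_cont : Continuous Cu := by
    rw [hCudef]
    apply MeasureTheory.continuous_of_dominated (bound := fun z => ‖u z‖)
    · intro ξ
      exact ((by fun_prop : Continuous fun z : ℝ × ℝ =>
          Complex.exp (Complex.I * ((2 * Real.pi * (z.1 * ξ.1 + z.2 * ξ.2) : ℝ) : ℂ))).aestronglyMeasurable).mul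
        ((Complex.measurable_ofReal.comp hmeas).aestronglyMeasurable)
    · intro ξ
      refine Filter.Eventually.of_forall fun z => ?_
      rw [norm_mul, hker_norm, one_mul, Complex.norm_real]
    · exact hL1.norm
    · refine Filter.Eventually.of_forall fun z => ?_
      fun_prop
  have hCu0 : Cu 0 = ((∫ z : ℝ × ℝ, u z : ℝ) : ℂ) := by
    rw [hCudef]
    simp only [Prod.fst_zero, Prod.snd_zero, mul_zero, add_zero, Complex.ofReal_zero,
      Complex.exp_zero, one_mul]
    exact integral_ofReal
  have hCu_eq : ∀ ξ : ℝ × ℝ, Cu ξ = ∫ z : ℝ × ℝ,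
      Complex.exp (Complex.I * ((2 * Real.pi * (z.1 * ξ.1 + z.2 * ξ.2) : ℝ) : ℂ)) * u z :=
    fun ξ => by rw [hCudef]
  -- key identity
  have key : ∀ n : ℕ, (∫ η : ℝ × ℝ, (symb s ω (ε n • η) : ℂ)
        * FTc (fun x => (bump2 x : ℂ)) η * Cu (ε n • η))
      = ((∫ z : ℝ × ℝ, u z ^ (p - 1) * bump2 (ε n • z) : ℝ) : ℂ) := by
    intro n
    have hne : ε n ≠ 0 := (hεpos n).ne'
    have heqn := heq (dil (ε n) hne bump2)
    set g : (ℝ × ℝ) → ℂ := fun ξ =>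
      (symb s ω ξ : ℂ) * FTc (fun x => ((dil (ε n) hne bump2) x : ℂ)) ξ with hgdef
    have hgcont : Continuous g := by
      rw [hgdef]
      exact (Complex.continuous_ofReal.comp (continuous_symb s ω hs0)).mul
        (continuous_FTc (dil (ε n) hne bump2))
    have hgint : Integrable g volume := by
      refine (((integrable_cube_FT (dil (ε n) hne bump2)).const_mul
        (4 * Real.pi ^ 2 + 64 + |ω|))).mono' hgcont.aestronglyMeasurable ?_
      refine Filter.Eventually.of_forall fun ξ => ?_
      rw [hgdef]
      simp only [norm_mul, Complex.norm_real, Real.norm_eq_abs]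
      refine le_trans (mul_le_mul_of_nonneg_right (abs_symb_le s ω hs0 hs1 ξ) (norm_nonneg _)) ?_
      rw [mul_assoc]
    rw [fubini_pairing u hmeas hL1 g hgint hgcont Cu hCu_eq] at heqn
    simp_rw [dil_apply] at heqn
    have hdil : ∀ ξ : ℝ × ℝ, FTc (fun x => ((dil (ε n) hne bump2) x : ℂ)) ξ
        = ((ε n ^ 2)⁻¹ : ℝ) • FTc (fun x => (bump2 x : ℂ)) ((ε n)⁻¹ • ξ) :=
      FTc_dil bump2 (ε n) (hεpos n)
    have hstep : ∫ ξ : ℝ × ℝ, g ξ * Cu ξ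
        = ((ε n ^ 2)⁻¹ : ℝ) • ∫ ξ : ℝ × ℝ,
            (symb s ω ξ : ℂ) * FTc (fun x => (bump2 x : ℂ)) ((ε n)⁻¹ • ξ) * Cu ξ := by
      rw [← integral_smul]
      congr 1
      funext ξ
      simp only [hgdef]
      rw [hdil ξ]
      simp [Complex.real_smul]
      ring
    have hcov := MeasureTheory.Measure.integral_comp_smul volume
      (fun ξ : ℝ × ℝ => (symb s ω ξ : ℂ)
        * FTc (fun x => (bump2 x : ℂ)) ((ε n)⁻¹ • ξ) * Cu ξ) (ε n)
    rw [finrank_V, _root_.abs_of_nonneg (by positivity : (0:ℝ) ≤ ((ε n ^ 2)⁻¹))] at hcov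
    have hIF : (∫ ξ : ℝ × ℝ, (symb s ω ξ : ℂ)
          * FTc (fun x => (bump2 x : ℂ)) ((ε n)⁻¹ • ξ) * Cu ξ)
        = ((ε n ^ 2 : ℝ)) • ∫ x : ℝ × ℝ, (symb s ω (ε n • x) : ℂ)
          * FTc (fun x' => (bump2 x' : ℂ)) ((ε n)⁻¹ • (ε n • x)) * Cu (ε n • x) := by
      rw [hcov, smul_smul, mul_inv_cancel₀ (pow_ne_zero 2 hne), one_smul]
    have hclean : ∀ x : ℝ × ℝ, (ε n)⁻¹ • (ε n • x) = x := by
      intro x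
      rw [smul_smul, inv_mul_cancel₀ hne, one_smul]
    simp_rw [hclean] at hIF
    rw [hstep, hIF, smul_smul, inv_mul_cancel₀ (pow_ne_zero 2 hne), one_smul] at heqn
    exact heqn
  -- left side convergence
  set Fb : (ℝ × ℝ) → ℂ := fun η => FTc (fun x => (bump2 x : ℂ)) η with hFbdef
  have hFbcont : Continuous Fb := continuous_FTc bump2
  have hFb_int1 : ∫ η : ℝ × ℝ, Fb η = (1 : ℂ) := by
    rw [hFbdef, integral_FTc_eq bump2, bump2_zero]
    norm_num
  have hBnn : 0 ≤ B := by
    rw [hBdef]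
    exact integral_nonneg fun z => norm_nonneg _
  have hAB : Integrable (fun η : ℝ × ℝ => symb s |ω| η * ‖Fb η‖ * B) volume := by
    refine ((integrable_cube_FT bump2).const_mul ((4 * Real.pi ^ 2 + 64 + |ω|) * B)).mono' ?_ ?_
    · exact (((continuous_symb s |ω| hs0).mul hFbcont.norm).mul continuous_const).aestronglyMeasurable
    · refine Filter.Eventually.of_forall fun η => ?_
      rw [Real.norm_of_nonneg (mul_nonneg (mul_nonneg (symb_abs_nonneg s ω η) (norm_nonneg _)) hBnn)]
      have h1 : symb s |ω| η ≤ (4 * Real.pi ^ 2 + 64 + |ω|) * (1 + ‖η‖) ^ 3 := by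
        have h2 := abs_symb_le s |ω| hs0 hs1 η
        rw [_root_.abs_abs] at h2
        exact (le_abs_self _).trans h2
      calc symb s |ω| η * ‖Fb η‖ * B
          ≤ ((4 * Real.pi ^ 2 + 64 + |ω|) * (1 + ‖η‖) ^ 3) * ‖Fb η‖ * B := by
            have := mul_le_mul_of_nonneg_right (mul_le_mul_of_nonneg_right h1 (norm_nonneg (Fb η))) hBnn
            exact this
        _ = (4 * Real.pi ^ 2 + 64 + |ω|) * B * ((1 + ‖η‖) ^ 3 * ‖Fb η‖) := by ring
  have hLtend : Filter.Tendsto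
      (fun n => ∫ η : ℝ × ℝ, (symb s ω (ε n • η) : ℂ) * Fb η * Cu (ε n • η)) Filter.atTop
      (nhds (∫ η : ℝ × ℝ, (ω : ℂ) * Fb η * ((∫ z : ℝ × ℝ, u z : ℝ) : ℂ))) := by
    apply MeasureTheory.tendsto_integral_of_dominated_convergence
      (bound := fun η => symb s |ω| η * ‖Fb η‖ * B)
    · intro n
      have hsm : Continuous fun η : ℝ × ℝ => ε n • η := continuous_const_smul (ε n)
      exact (((Complex.continuous_ofReal.comp ((continuous_symb s ω hs0).comp hsm)).mul
        hFbcont).mul (hCu_cont.comp hsm)).aestronglyMeasurable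
    · exact hAB
    · intro n
      refine Filter.Eventually.of_forall fun η => ?_
      rw [norm_mul, norm_mul, Complex.norm_real, Real.norm_eq_abs]
      refine mul_le_mul (mul_le_mul_of_nonneg_right
        (symb_scaled_abs_le s ω hs0 (hεpos n) (hεle1 n) η) (norm_nonneg _))
        (hCu_bound _) (norm_nonneg _)
        (mul_nonneg (symb_abs_nonneg s ω η) (norm_nonneg _))
    · refine Filter.Eventually.of_forall fun η => ?_
      have hsmul : Filter.Tendsto (fun n => ε n • η) Filter.atTop (nhds 0) := by
        have := hεto0.smul_const η
        rwa [zero_smul] at this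
      have t1 : Filter.Tendsto (fun n => ((symb s ω (ε n • η) : ℝ) : ℂ)) Filter.atTop
          (nhds (ω : ℂ)) :=
        (Complex.continuous_ofReal.tendsto ω).comp (symb_scaled_tendsto s ω hs0 hεpos hεto0 η)
      have t2 : Filter.Tendsto (fun n => Cu (ε n • η)) Filter.atTop (nhds (Cu 0)) :=
        (hCu_cont.tendsto 0).comp hsmul
      rw [hCu0] at t2
      exact (t1.mul tendsto_const_nhds).mul t2
  have hLval : (∫ η : ℝ × ℝ, (ω : ℂ) * Fb η * ((∫ z : ℝ × ℝ, u z : ℝ) : ℂ))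
      = (ω : ℂ) * ((∫ z : ℝ × ℝ, u z : ℝ) : ℂ) := by
    have hrw : ∀ η : ℝ × ℝ, (ω : ℂ) * Fb η * ((∫ z : ℝ × ℝ, u z : ℝ) : ℂ)
        = ((ω : ℂ) * ((∫ z : ℝ × ℝ, u z : ℝ) : ℂ)) * Fb η := fun η => by ring
    simp_rw [hrw]
    rw [MeasureTheory.integral_const_mul, hFb_int1, mul_one]
  -- right side convergence
  have hRtend : Filter.Tendsto (fun n => ∫ z : ℝ × ℝ, u z ^ (p - 1) * bump2 (ε n • z))
      Filter.atTop (nhds (∫ z : ℝ × ℝ, u z ^ (p - 1))) := by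
    apply MeasureTheory.tendsto_integral_of_dominated_convergence
      (bound := fun z => |u z ^ (p - 1)|)
    · intro n
      have hsm : Continuous fun z : ℝ × ℝ => ε n • z := continuous_const_smul (ε n)
      exact hLp.aestronglyMeasurable.mul ((bump2.continuous.comp hsm).aestronglyMeasurable)
    · exact hLp.abs
    · intro n
      refine Filter.Eventually.of_forall fun z => ?_
      rw [Real.norm_eq_abs, abs_mul]
      have hb1 : |bump2 (ε n • z)| ≤ 1 := by
        rw [_root_.abs_of_nonneg (bump2_nonneg _)]
        exact bump2_le_one _
      nlinarith [abs_nonneg (u z ^ (p - 1)), abs_nonneg (bump2 (ε n • z))]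
    · refine Filter.Eventually.of_forall fun z => ?_
      have hsmul : Filter.Tendsto (fun n => ε n • z) Filter.atTop (nhds 0) := by
        have := hεto0.smul_const z
        rwa [zero_smul] at this
      have hbt : Filter.Tendsto (fun n => bump2 (ε n • z)) Filter.atTop (nhds (bump2 0)) :=
        (bump2.continuous.tendsto 0).comp hsmul
      rw [bump2_zero] at hbt
      have := (tendsto_const_nhds (x := u z ^ (p - 1)) (f := Filter.atTop)).mul hbt
      rwa [mul_one] at this
  -- combine
  have hC2 : Filter.Tendsto (fun n => ((∫ z : ℝ × ℝ, u z ^ (p - 1) * bump2 (ε n • z) : ℝ) : ℂ))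
      Filter.atTop (nhds ((∫ z : ℝ × ℝ, u z ^ (p - 1) : ℝ) : ℂ)) :=
    (Complex.continuous_ofReal.tendsto _).comp hRtend
  have hL2 : Filter.Tendsto (fun n => ((∫ z : ℝ × ℝ, u z ^ (p - 1) * bump2 (ε n • z) : ℝ) : ℂ))
      Filter.atTop (nhds ((ω : ℂ) * ((∫ z : ℝ × ℝ, u z : ℝ) : ℂ))) := by
    have h := hLtend.congr key
    rwa [hLval] at h
  have hfinal : (ω : ℂ) * ((∫ z : ℝ × ℝ, u z : ℝ) : ℂ)
      = ((∫ z : ℝ × ℝ, u z ^ (p - 1) : ℝ) : ℂ) := tendsto_nhds_unique hL2 hC2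
  have hreal : ω * (∫ z : ℝ × ℝ, u z) = ∫ z : ℝ × ℝ, u z ^ (p - 1) := by
    exact_mod_cast hfinal
  nlinarith [hI0, hIp]
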